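/- Let ψ : [0, ∞) → (0, ∞) be a C¹ convex function with ψ(0) > 0, and define s₀ := sup { r ≥ 0 : ψ(r) − ψ'(r)·r > 0 } (possibly +∞). Define ψ̄(r) = ψ(r) for r ∈ [0, s₀) and ψ̄(r) = ψ'(s₀)·r for r ≥ s₀ (when s₀ < ∞). Then ψ̄ agrees with ψ on [0, s₀], ψ̄ is convex and subadditive, and ψ̄ ≤ ψ. -/

import Mathlib

theorem stmt6 (ψ ψbar : ℝ → ℝ) (s₀ : ℝ)
    (hC1 : ContDiff ℝ 1 ψ)
    (hconv : ConvexOn ℝ (Set.Ici (0:ℝ)) ψ)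
    (hpos : ∀ s : ℝ, 0 ≤ s → 0 < ψ s)
    (hbdd : BddAbove {r : ℝ | 0 ≤ r ∧ 0 < ψ r - deriv ψ r * r})
    (hs₀ : s₀ = sSup {r : ℝ | 0 ≤ r ∧ 0 < ψ r - deriv ψ r * r})
    (hdef : ∀ r : ℝ, 0 ≤ r → ψbar r = if r < s₀ then ψ r else deriv ψ s₀ * r) :
    (∀ r : ℝ, 0 ≤ r → r ≤ s₀ → ψbar r = ψ r) ∧
    ConvexOn ℝ (Set.Ici (0:ℝ)) ψbar ∧
    (∀ r t : ℝ, 0 ≤ r → 0 ≤ t → ψbar (r + t) ≤ ψbar r + ψbar t) ∧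
    (∀ r : ℝ, 0 ≤ r → ψbar r ≤ ψ r) := by
  have hdiff : Differentiable ℝ ψ := hC1.differentiable one_ne_zero
  have hderivcont : Continuous (deriv ψ) := hC1.continuous_deriv le_rfl
  -- tangent line inequality:
  have tangent : ∀ a b : ℝ, 0 ≤ a → 0 ≤ b → ψ a + deriv ψ a * (b - a) ≤ ψ b := by
    intro a b ha hb
    rcases lt_trichotomy a b with h | h | h
    · have h1 := hconv.deriv_le_slope ha hb h (hdiff a)
      rw [slope_def_field] at h1
      have hba : 0 < b - a := by linarith
      nlinarith [(le_div_iff₀ hba).mp h1]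
    · simp [h]
    · have h1 := hconv.slope_le_deriv hb ha h (hdiff a)
      rw [slope_def_field] at h1
      have hab : 0 < a - b := by linarith
      nlinarith [(div_le_iff₀ hab).mp h1]
  -- monotonicity of deriv ψ on [0,∞):
  have dmono : ∀ a b : ℝ, 0 ≤ a → a ≤ b → deriv ψ a ≤ deriv ψ b := by
    intro a b ha hab
    rcases hab.lt_or_eq with h | h
    · have h1 := tangent a b ha (le_trans ha hab)
      have h2 := tangent b a (le_trans ha hab) ha
      nlinarith
    · rw [h]
  set g : ℝ → ℝ := fun r => ψ r - deriv ψ r * r with hg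
  have hgcont : Continuous g := (hdiff.continuous).sub (hderivcont.mul continuous_id)
  -- g nonincreasing on [0,∞)
  have gmono : ∀ a b : ℝ, 0 ≤ a → a ≤ b → g b ≤ g a := by
    intro a b ha hab
    have h1 := tangent b a (le_trans ha hab) ha
    have h2 := dmono a b ha hab
    simp only [hg]
    nlinarith
  set S : Set ℝ := {r : ℝ | 0 ≤ r ∧ 0 < ψ r - deriv ψ r * r} with hS
  have h0S : (0:ℝ) ∈ S := ⟨le_rfl, by simpa using (hpos 0 le_rfl)⟩
  have hSne : S.Nonempty := ⟨0, h0S⟩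
  have hs₀0 : 0 ≤ s₀ := hs₀ ▸ le_csSup hbdd h0S
  -- g s₀ = 0
  have hgs₀ : g s₀ = 0 := by
    rcases lt_trichotomy (g s₀) 0 with h | h | h
    · exfalso
      have hs₀pos : 0 < s₀ := by
        rcases hs₀0.lt_or_eq with h' | h'
        · exact h'
        · exfalso; rw [← h'] at h
          have : 0 < g 0 := by simpa [hg] using hpos 0 le_rfl
          linarith
      have hev : ∀ᶠ x in nhds s₀, g x < 0 ∧ 0 < x := by
        filter_upwards [(hgcont.continuousAt).eventually (gt_mem_nhds h),
          eventually_gt_nhds hs₀pos] with x h1 h2 using ⟨h1, h2⟩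
      have hev2 : ∀ᶠ x in nhdsWithin s₀ (Set.Iio s₀), (g x < 0 ∧ 0 < x) ∧ x < s₀ :=
        (hev.filter_mono nhdsWithin_le_nhds).and self_mem_nhdsWithin
      obtain ⟨x, ⟨hgx, hx0⟩, hxlt⟩ := hev2.exists
      have hle : s₀ ≤ x := by
        rw [hs₀]
        refine csSup_le hSne fun y hy => ?_
        by_contra hyx
        push_neg at hyx
        have := gmono x y (le_of_lt hx0) (le_of_lt hyx)
        have hgy : 0 < g y := hy.2
        linarith
      exact absurd hxlt (not_lt.mpr hle)
    · exact h
    · exfalso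
      have hev : ∀ᶠ x in nhdsWithin s₀ (Set.Ioi s₀), 0 < g x :=
        ((hgcont.continuousAt).eventually (lt_mem_nhds h)).filter_mono nhdsWithin_le_nhds
      obtain ⟨x, hgx, hxgt⟩ := (hev.and self_mem_nhdsWithin).exists
      have hxS : x ∈ S := ⟨le_trans hs₀0 (le_of_lt hxgt), hgx⟩
      have : x ≤ s₀ := hs₀ ▸ le_csSup hbdd hxS
      exact absurd this (not_le.mpr hxgt)
  have hψs₀ : ψ s₀ = deriv ψ s₀ * s₀ := by
    have : ψ s₀ - deriv ψ s₀ * s₀ = 0 := hgs₀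
    linarith
  -- part 1 : ψbar = ψ on [0, s₀]
  have part1 : ∀ r : ℝ, 0 ≤ r → r ≤ s₀ → ψbar r = ψ r := by
    intro r hr hrs
    rw [hdef r hr]
    rcases hrs.lt_or_eq with h | h
    · rw [if_pos h]
    · rw [if_neg (by rw [h]; exact lt_irrefl _), h, ← hψs₀]
  -- the tangent line at t ∈ [0,s₀] is below ψbar on [0,∞)
  have Ldom : ∀ t w : ℝ, 0 ≤ t → t ≤ s₀ → 0 ≤ w →
      ψ t + deriv ψ t * (w - t) ≤ ψbar w := by
    intro t w ht hts hw
    rw [hdef w hw]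
    by_cases h : w < s₀
    · rw [if_pos h]; exact tangent t w ht hw
    · rw [if_neg h]
      push_neg at h
      have h1 : ψ t + deriv ψ t * (s₀ - t) ≤ ψ s₀ := tangent t s₀ ht hs₀0
      have h2 : deriv ψ t ≤ deriv ψ s₀ := dmono t s₀ ht hts
      nlinarith
  -- ψbar z equals its tangent value at min z s₀
  have Leq : ∀ z : ℝ, 0 ≤ z →
      ψbar z = ψ (min z s₀) + deriv ψ (min z s₀) * (z - min z s₀) := by
    intro z hz
    rw [hdef z hz]
    by_cases h : z < s₀
    · rw [if_pos h, min_eq_left (le_of_lt h)]; ring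
    · push_neg at h
      rw [if_neg (not_lt.mpr h), min_eq_right h]
      nlinarith [hψs₀]
  -- part 2 : convexity
  have part2 : ConvexOn ℝ (Set.Ici (0:ℝ)) ψbar := by
    refine ⟨convex_Ici 0, fun x hx y hy a b ha hb hab => ?_⟩
    simp only [Set.mem_Ici] at hx hy
    have hz : 0 ≤ a * x + b * y := by positivity
    set t := min (a * x + b * y) s₀ with htdef
    have ht0 : 0 ≤ t := le_min hz hs₀0
    have hts : t ≤ s₀ := min_le_right _ _
    have e1 := Leq (a * x + b * y) hz
    have e2 := Ldom t x ht0 hts hx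
    have e3 := Ldom t y ht0 hts hy
    simp only [smul_eq_mul]
    rw [e1, ← htdef]
    calc ψ t + deriv ψ t * (a * x + b * y - t)
        = a * (ψ t + deriv ψ t * (x - t)) + b * (ψ t + deriv ψ t * (y - t)) := by
          have : a = 1 - b := by linarith
          rw [this]; ring
      _ ≤ a * ψbar x + b * ψbar y := by
          have := mul_le_mul_of_nonneg_left e2 ha
          have := mul_le_mul_of_nonneg_left e3 hb
          linarith
  -- ratio lemma : for 0 ≤ r ≤ u, r * ψbar u ≤ u * ψbar r
  have ratio : ∀ r u : ℝ, 0 ≤ r → r ≤ u → r * ψbar u ≤ u * ψbar r := by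
    intro r u hr hru
    have hu : 0 ≤ u := le_trans hr hru
    set t := min u s₀ with htdef
    have ht0 : 0 ≤ t := le_min hu hs₀0
    have hts : t ≤ s₀ := min_le_right _ _
    have e1 := Leq u hu
    have e2 := Ldom t r ht0 hts hr
    have hgt : 0 ≤ g t := by
      have := gmono t s₀ ht0 hts
      linarith [hgs₀]
    simp only [hg] at hgt
    have key : r * (ψ t + deriv ψ t * (u - t)) ≤ u * (ψ t + deriv ψ t * (r - t)) := by
      nlinarith
    calc r * ψbar u = r * (ψ t + deriv ψ t * (u - t)) := by rw [e1, ← htdef]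
      _ ≤ u * (ψ t + deriv ψ t * (r - t)) := key
      _ ≤ u * ψbar r := mul_le_mul_of_nonneg_left e2 hu
  -- part 3 : subadditivity
  have hψbar0 : 0 < ψbar 0 := by
    rw [hdef 0 le_rfl]
    by_cases h : (0:ℝ) < s₀
    · rw [if_pos h]; exact hpos 0 le_rfl
    · rw [if_neg h]
      push_neg at h
      exfalso
      have hs00 : s₀ = 0 := le_antisymm h hs₀0
      rw [hs00] at hgs₀
      have : g 0 = ψ 0 := by simp [hg]
      have := hpos 0 le_rfl
      linarith
  have ψbarpos : ∀ r : ℝ, 0 ≤ r → 0 < ψbar r := by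
    intro r hr
    rw [hdef r hr]
    by_cases h : r < s₀
    · rw [if_pos h]; exact hpos r hr
    · rw [if_neg h]
      push_neg at h
      have hψr := hpos s₀ hs₀0
      have hd : 0 < deriv ψ s₀ := by
        rcases hs₀0.lt_or_eq with h' | h'
        · nlinarith [hψs₀]
        · exfalso
          rw [← h'] at hψs₀
          simp at hψs₀
          have := hpos 0 le_rfl
          linarith
      have : 0 < s₀ := by nlinarith [hψs₀]
      have : 0 < r := lt_of_lt_of_le this h
      positivity
  have part3 : ∀ r t : ℝ, 0 ≤ r → 0 ≤ t → ψbar (r + t) ≤ ψbar r + ψbar t := by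
    intro r t hr ht
    rcases hr.lt_or_eq with hr' | hr'
    · rcases ht.lt_or_eq with ht' | ht'
      · have h1 := ratio r (r + t) hr (by linarith)
        have h2 := ratio t (r + t) ht (by linarith)
        have hrt : 0 < r + t := by linarith
        have : (r + t) * ψbar (r + t) ≤ (r + t) * (ψbar r + ψbar t) := by nlinarith
        exact le_of_mul_le_mul_left this hrt
      · rw [← ht']
        simpa using le_of_lt (lt_add_of_pos_right (ψbar r) hψbar0)
    · rw [← hr']
      simpa using le_of_lt (lt_add_of_pos_left (ψbar t) hψbar0)
  -- part 4 : ψbar ≤ ψ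
  have part4 : ∀ r : ℝ, 0 ≤ r → ψbar r ≤ ψ r := by
    intro r hr
    rw [hdef r hr]
    by_cases h : r < s₀
    · rw [if_pos h]
    · rw [if_neg h]
      push_neg at h
      have := tangent s₀ r hs₀0 hr
      nlinarith [hψs₀]
  exact ⟨part1, part2, part3, part4⟩
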